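/- Let (L, c) be a commutator lattice with c ⊤ ⊤ = ⊤. Then every maximal element of L \ {⊤} (i.e. every p ≠ ⊤ such that p ≤ q implies q = p or q = ⊤) is prime. If moreover ⊤ is a compact element of L, then for every x ∈ L with x ≠ ⊤ there exists a prime element p with x ≤ p; in particular, ρ(x) = ⊤ implies x = ⊤. -/

import Mathlib

/-- A prime element of a commutator lattice. -/
def IsCLPrime {L : Type*} [CompleteLattice L] (c : L → L → L) (p : L) : Prop :=
  p ≠ ⊤ ∧ ∀ a b : L, c a b ≤ p → a ≤ p ∨ b ≤ p

/-- The radical of an element of a commutator lattice. -/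
def clRadical {L : Type*} [CompleteLattice L] (c : L → L → L) (x : L) : L :=
  sInf {p : L | IsCLPrime c p ∧ x ≤ p}

/-- The December 2024 Mathlib definition of a compact element of a complete lattice. -/
def CompleteLattice.IsCompactElement {α : Type*} [CompleteLattice α] (k : α) :=
  ∀ s : Set α, k ≤ sSup s → ∃ t : Finset α, ↑t ⊆ s ∧ k ≤ t.sup id

/-- If `c ⊤ ⊤ = ⊤`, maximal elements are prime; if moreover `⊤` is compact,
every `x ≠ ⊤` lies below a prime, and `ρ(x) = ⊤` implies `x = ⊤`. -/
theorem stmt_2 {L : Type*} [CompleteLattice L] (c : L → L → L)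
    (hcomm : ∀ x y : L, c x y = c y x)
    (hle : ∀ x y : L, c x y ≤ x ⊓ y)
    (hdist : ∀ (x : L) (S : Set L), c x (sSup S) = ⨆ y ∈ S, c x y)
    (htop : c ⊤ ⊤ = ⊤) :
    (∀ p : L, p ≠ ⊤ → (∀ q : L, p ≤ q → q = p ∨ q = ⊤) → IsCLPrime c p) ∧
    (CompleteLattice.IsCompactElement (⊤ : L) →
      (∀ x : L, x ≠ ⊤ → ∃ p : L, IsCLPrime c p ∧ x ≤ p) ∧
      (∀ x : L, clRadical c x = ⊤ → x = ⊤)) := by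
  have hdist2 : ∀ x y z : L, c x (y ⊔ z) = c x y ⊔ c x z := by
    intro x y z
    have := hdist x {y, z}
    rw [sSup_pair] at this
    rw [this, iSup_pair]
  have hmax : ∀ p : L, p ≠ ⊤ → (∀ q : L, p ≤ q → q = p ∨ q = ⊤) → IsCLPrime c p := by
    intro p hp hmaxp
    refine ⟨hp, fun a b hab => ?_⟩
    by_contra h
    push_neg at h
    obtain ⟨ha, hb⟩ := h
    have hpa : p ⊔ a = ⊤ := by
      rcases hmaxp (p ⊔ a) le_sup_left with h | h
      · exact absurd (le_sup_right.trans h.le) ha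
      · exact h
    have hpb : p ⊔ b = ⊤ := by
      rcases hmaxp (p ⊔ b) le_sup_left with h | h
      · exact absurd (le_sup_right.trans h.le) hb
      · exact h
    have key : (⊤ : L) ≤ p := by
      calc (⊤ : L) = c (p ⊔ a) (p ⊔ b) := by rw [hpa, hpb, htop]
        _ = c (p ⊔ a) p ⊔ c (p ⊔ a) b := hdist2 _ _ _
        _ = c (p ⊔ a) p ⊔ (c b p ⊔ c b a) := by rw [hcomm (p ⊔ a) b, hdist2]
        _ ≤ p := by
            have h1 : c (p ⊔ a) p ≤ p := (hle _ _).trans inf_le_right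
            have h2 : c b p ≤ p := (hle _ _).trans inf_le_right
            have h3 : c b a ≤ p := (hcomm b a ▸ hab)
            exact sup_le h1 (sup_le h2 h3)
    exact hp (top_le_iff.mp key)
  refine ⟨hmax, fun hcpt => ?_⟩
  have hex : ∀ x : L, x ≠ ⊤ → ∃ p : L, IsCLPrime c p ∧ x ≤ p := by
    intro x hx
    have := CompleteLattice.coatomic_of_top_compact
        ((CompleteLattice.isCompactElement_iff_exists_le_sSup_of_le_sSup L ⊤).mpr hcpt)
    rcases this.eq_top_or_exists_le_coatom x with h | ⟨p, hp, hxp⟩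
    · exact absurd h hx
    · refine ⟨p, hmax p hp.1 fun q hq => ?_, hxp⟩
      rcases eq_or_lt_of_le hq with h | h
      · exact Or.inl h.symm
      · exact Or.inr (hp.2 q h)
  refine ⟨hex, fun x hrad => ?_⟩
  by_contra hx
  obtain ⟨p, hp, hxp⟩ := hex x hx
  have : clRadical c x ≤ p := sInf_le ⟨hp, hxp⟩
  rw [hrad, top_le_iff] at this
  exact hp.1 this
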